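/- The interior equilibrium of the bribery game decreases as the pool multiplier increases: if F₁ < F₂ with F̄_min < F₁ and F₂ < F̄_max, and x₁*, x₂* ∈ (0,1) are zeros of Q̄_{F₁} and Q̄_{F₂} respectively, then x₂* < x₁*. (Hence a richer economic potential enlarges the basin of attraction of full cooperation in the bribery game.) -/

import Mathlib

/-- The bribery-game gradient function Q̄. -/
noncomputable def Qbar (N : ℕ) (c τ β rp α F h γ p q : ℝ) (x : ℝ) : ℝ :=
  F * c / N - c - 2 * α * β * τ * rp + β * τ * rp
    + ((N : ℝ) - 1) / N * γ * h * (q - p)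
    - α * β * τ * rp * (∑ k ∈ Finset.range (N - 1), (1 - x) ^ (k + 1))
    + (1 - α) * β * τ * rp * (∑ k ∈ Finset.range (N - 1), x ^ (k + 1))

/-- The lower threshold F̄_min for the pool multiplier in the bribery game. -/
noncomputable def Fbarmin (N : ℕ) (c τ β rp α h γ p q : ℝ) : ℝ :=
  (N * c - ((N : ℝ) - 1) * γ * h * (q - p) - N * β * τ * rp * (1 - 2 * α)
    - N * ((N : ℝ) - 1) * (1 - α) * β * τ * rp) / c

/-- The upper threshold F̄_max for the pool multiplier in the bribery game. -/
noncomputable def Fbarmax (N : ℕ) (c τ β rp α h γ p q : ℝ) : ℝ :=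
  (N * c - ((N : ℝ) - 1) * γ * h * (q - p) - N * β * τ * rp
    + N * α * β * τ * rp * ((N : ℝ) + 1)) / c

/-- The interior equilibrium of the bribery game decreases as the pool multiplier
increases: if F₁ < F₂ with F̄_min < F₁ and F₂ < F̄_max, and x₁*, x₂* ∈ (0,1) are zeros
of Q̄_{F₁} and Q̄_{F₂} respectively, then x₂* < x₁*. -/
theorem bg_equilibrium_decreasing_in_F (N : ℕ) (hN : 2 ≤ N) (c τ β rp α h γ p q : ℝ)
    (hc : 0 < c) (hτ : 0 < τ) (hβ : 0 < β) (hrp : 0 < rp) (hα0 : 0 ≤ α) (hα1 : α ≤ 1)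
    (hh : 0 < h) (hγ0 : 0 < γ) (hγ1 : γ ≤ 1) (hp0 : 0 ≤ p) (hp1 : p ≤ 1)
    (hq0 : 0 ≤ q) (hq1 : q ≤ 1)
    (F₁ F₂ : ℝ) (hF12 : F₁ < F₂)
    (hFlo : Fbarmin N c τ β rp α h γ p q < F₁) (hFhi : F₂ < Fbarmax N c τ β rp α h γ p q)
    (x₁ x₂ : ℝ) (hx₁ : 0 < x₁) (hx₁' : x₁ < 1) (hx₂ : 0 < x₂) (hx₂' : x₂ < 1)
    (hQ₁ : Qbar N c τ β rp α F₁ h γ p q x₁ = 0) (hQ₂ : Qbar N c τ β rp α F₂ h γ p q x₂ = 0) :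
    x₂ < x₁ := by
  by_contra hcon
  push_neg at hcon
  have hN0 : (0:ℝ) < N := by
    have : (2:ℝ) ≤ N := by exact_mod_cast hN
    linarith
  have hS1 : (∑ k ∈ Finset.range (N - 1), x₁ ^ (k + 1))
      ≤ ∑ k ∈ Finset.range (N - 1), x₂ ^ (k + 1) :=
    Finset.sum_le_sum fun k _ => pow_le_pow_left₀ hx₁.le hcon _
  have hS2 : (∑ k ∈ Finset.range (N - 1), (1 - x₂) ^ (k + 1))
      ≤ ∑ k ∈ Finset.range (N - 1), (1 - x₁) ^ (k + 1) :=
    Finset.sum_le_sum fun k _ => pow_le_pow_left₀ (by linarith) (by linarith) _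
  have h1 : α * β * τ * rp * (∑ k ∈ Finset.range (N - 1), (1 - x₂) ^ (k + 1))
      ≤ α * β * τ * rp * (∑ k ∈ Finset.range (N - 1), (1 - x₁) ^ (k + 1)) :=
    mul_le_mul_of_nonneg_left hS2 (by positivity)
  have h2 : (1 - α) * β * τ * rp * (∑ k ∈ Finset.range (N - 1), x₁ ^ (k + 1))
      ≤ (1 - α) * β * τ * rp * (∑ k ∈ Finset.range (N - 1), x₂ ^ (k + 1)) := by
    have hα' : 0 ≤ (1 - α) * β * τ * rp := by
      have : 0 ≤ 1 - α := by linarith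
      positivity
    exact mul_le_mul_of_nonneg_left hS1 hα'
  have key : Qbar N c τ β rp α F₂ h γ p q x₁ ≤ Qbar N c τ β rp α F₂ h γ p q x₂ := by
    unfold Qbar
    linarith
  have hFdiff : Qbar N c τ β rp α F₁ h γ p q x₁ < Qbar N c τ β rp α F₂ h γ p q x₁ := by
    unfold Qbar
    have : F₁ * c / N < F₂ * c / N :=
      (div_lt_div_iff_of_pos_right hN0).mpr (mul_lt_mul_of_pos_right hF12 hc)
    linarith
  linarith [hQ₁, hQ₂]
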